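/- Let μ, σ ∈ ℝ with μ ≠ 0 (normal parameters). Set e := Exp∘( (σ²/2)·X² + μ·X ) - 1 ∈ ℝ⟦X⟧. Then for all natural numbers n ≥ k: c_n( e^k / k! ) = Σ_{j=k}^{n} (n!/j!)·binom(j, n-j)·μ^{2j-n}·(σ²/2)^{n-j}·S₂(j,k), where μ^{2j-n} is the integer power of μ (with integer exponent 2j-n ∈ ℤ; terms with 2j < n vanish since then binom(j,n-j) = 0). -/

import Mathlib

open PowerSeries Finset

noncomputable section

/-- `cN n F = n! * (coefficient of X^n in F)`. -/
def cN (n : ℕ) (F : PowerSeries ℝ) : ℝ := (n.factorial : ℝ) * PowerSeries.coeff n F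

/-- Formal substitution `F ∘ G` (faithful when `G` has zero constant coefficient). -/
def pcomp (F G : PowerSeries ℝ) : PowerSeries ℝ :=
  PowerSeries.mk fun n =>
    ∑ k ∈ Finset.range (n + 1), (PowerSeries.coeff k F) * (PowerSeries.coeff n (G ^ k))

/-- The formal series of log(1+X). -/
def L : PowerSeries ℝ := PowerSeries.mk fun n => if n = 0 then 0 else (-1 : ℝ) ^ (n - 1) / n

/-- Falling factorial `(y)_m`. -/
def ff (y : ℝ) (m : ℕ) : ℝ := ∏ i ∈ Finset.range m, (y - i)

/-- Rising factorial `⟨y⟩_m`. -/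
def rf (y : ℝ) (m : ℕ) : ℝ := ∏ i ∈ Finset.range m, (y + i)

/-- Degenerate falling factorial `(x)_{n,λ}`. -/
def ffl (x : ℝ) (n : ℕ) (lam : ℝ) : ℝ := ∏ i ∈ Finset.range n, (x - i * lam)

/-- Stirling numbers of the second kind. -/
def S2 (n k : ℕ) : ℝ :=
  (k.factorial : ℝ)⁻¹ * ∑ j ∈ Finset.range (k + 1), (-1 : ℝ) ^ (k - j) * (k.choose j) * (j : ℝ) ^ n

/-- The falling factorial polynomial `x(x-1)⋯(x-n+1)`. -/
def fallingPoly (n : ℕ) : Polynomial ℝ := ∏ i ∈ Finset.range n, (Polynomial.X - Polynomial.C (i : ℝ))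

/-- (Signed) Stirling numbers of the first kind. -/
def S1 (n k : ℕ) : ℝ := (fallingPoly n).coeff k

/-- Degenerate Stirling numbers of the second kind. -/
def S2d (lam : ℝ) (n k : ℕ) : ℝ :=
  (k.factorial : ℝ)⁻¹ *
    ∑ j ∈ Finset.range (k + 1), (-1 : ℝ) ^ (k - j) * (k.choose j) * ffl (j : ℝ) n lam

/-- Formal degenerate exponential `e_λ`. -/
def degExp (lam : ℝ) : PowerSeries ℝ := PowerSeries.mk fun n => ffl 1 n lam / n.factorial

/-- Formal degenerate logarithm `Λ_λ` of `1+X`. -/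
def degLog (lam : ℝ) : PowerSeries ℝ :=
  lam⁻¹ • PowerSeries.mk fun n => if n = 0 then 0 else ff lam n / n.factorial

/-- Degenerate Stirling numbers of the first kind. -/
def S1d (lam : ℝ) (n k : ℕ) : ℝ := cN n ((k.factorial : ℝ)⁻¹ • (degLog lam) ^ k)

/-- Binomial series `(1+X)^c`. -/
def binser (c : ℝ) : PowerSeries ℝ := PowerSeries.mk fun n => ff c n / n.factorial

/-- Frobenius–Euler numbers of order `j`. -/
def FE (u : ℝ) (j n : ℕ) : ℝ :=
  cN n (((1 - u) • (PowerSeries.exp ℝ - PowerSeries.C u)⁻¹) ^ j)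


lemma coeff_pow_zero {G : PowerSeries ℝ} (hG : constantCoeff G = 0) {d n : ℕ} (h : n < d) :
    coeff n (G ^ d) = 0 := by
  have hX : X ∣ G := X_dvd_iff.mpr hG
  exact X_pow_dvd_iff.mp (pow_dvd_pow_of_dvd hX d) n h

lemma coeff_pcomp_big {G : PowerSeries ℝ} (hG : constantCoeff G = 0) (F : PowerSeries ℝ)
    (n N : ℕ) (hN : n < N) :
    coeff n (pcomp F G) = ∑ k ∈ Finset.range N, (coeff k F) * (coeff n (G ^ k)) := by
  rw [pcomp, coeff_mk]
  apply Finset.sum_subset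
  · intro x hx; simp only [mem_range] at *; omega
  · intro x _ hx
    simp only [mem_range, not_lt] at hx
    rw [coeff_pow_zero hG (by omega), mul_zero]

lemma pcomp_mul {G : PowerSeries ℝ} (hG : constantCoeff G = 0) (F H : PowerSeries ℝ) :
    pcomp (F * H) G = pcomp F G * pcomp H G := by
  ext n
  set f : ℕ × ℕ → ℝ := fun p => coeff p.1 F * coeff p.2 H * coeff n (G ^ (p.1 + p.2)) with hf
  set s : Finset (ℕ × ℕ) := (range (n+1) ×ˢ range (n+1)).filter (fun p => p.1 + p.2 ≤ n) with hs
  have key : ∀ p : ℕ × ℕ, n < p.1 + p.2 → f p = 0 := by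
    intro p hp; simp only [hf, coeff_pow_zero hG hp, mul_zero]
  -- RHS = sum over s
  have hRHS : coeff n (pcomp F G * pcomp H G) = ∑ p ∈ s, f p := by
    rw [coeff_mul]
    have h1 : ∀ p ∈ antidiagonal n, coeff p.1 (pcomp F G) * coeff p.2 (pcomp H G)
        = ∑ q ∈ range (n+1) ×ˢ range (n+1),
            coeff q.1 F * coeff q.2 H * (coeff p.1 (G^q.1) * coeff p.2 (G^q.2)) := by
      intro p hp
      have hp' := Finset.HasAntidiagonal.mem_antidiagonal.mp hp
      rw [coeff_pcomp_big hG F p.1 (n+1) (by omega), coeff_pcomp_big hG H p.2 (n+1) (by omega),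
        Finset.sum_mul_sum, Finset.sum_product]
      apply Finset.sum_congr rfl; intro a _; apply Finset.sum_congr rfl; intro b _; ring
    rw [Finset.sum_congr rfl h1, Finset.sum_comm]
    have h2 : ∀ q ∈ range (n+1) ×ˢ range (n+1),
        (∑ p ∈ antidiagonal n,
          coeff q.1 F * coeff q.2 H * (coeff p.1 (G^q.1) * coeff p.2 (G^q.2))) = f q := by
      intro q _
      rw [← Finset.mul_sum, ← coeff_mul, ← pow_add]
    rw [Finset.sum_congr rfl h2]
    symm
    apply Finset.sum_subset (Finset.filter_subset _ _)
    intro p hp hnp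
    simp only [hs, Finset.mem_filter, not_and, not_le] at hnp
    exact key p (hnp hp)
  -- LHS = sum over s
  have hLHS : coeff n (pcomp (F * H) G) = ∑ p ∈ s, f p := by
    rw [pcomp, coeff_mk]
    have h1 : ∀ k ∈ range (n+1), coeff k (F * H) * coeff n (G^k)
        = ∑ p ∈ s.filter (fun p => p.1 + p.2 = k), f p := by
      intro k hk
      have hanti : s.filter (fun p => p.1 + p.2 = k) = antidiagonal k := by
        ext p
        simp only [mem_range] at hk
        simp only [hs, Finset.mem_filter, Finset.mem_product, mem_range, Finset.HasAntidiagonal.mem_antidiagonal]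
        try omega
      rw [hanti, coeff_mul, Finset.sum_mul]
      apply Finset.sum_congr rfl
      intro p hp
      have hp' := Finset.HasAntidiagonal.mem_antidiagonal.mp hp
      simp only [hf, hp']
      try ring
    rw [Finset.sum_congr rfl h1]
    exact Finset.sum_fiberwise_of_maps_to (by intro p hp; simp only [hs, Finset.mem_filter] at hp; simp [mem_range]; omega) f
  rw [hLHS, hRHS]

lemma pcomp_one {G : PowerSeries ℝ} (hG : constantCoeff G = 0) : pcomp 1 G = 1 := by
  ext n
  rw [pcomp, coeff_mk]
  have : ∀ k ∈ range (n+1), coeff k (1 : PowerSeries ℝ) * coeff n (G ^ k)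
      = if k = 0 then coeff n (1 : PowerSeries ℝ) else 0 := by
    intro k _
    rcases eq_or_ne k 0 with rfl | hk
    · simp
    · simp [coeff_one, hk]
  rw [Finset.sum_congr rfl this, Finset.sum_ite_eq' (range (n+1)) 0]
  simp

lemma pcomp_pow {G : PowerSeries ℝ} (hG : constantCoeff G = 0) (F : PowerSeries ℝ) (k : ℕ) :
    pcomp (F ^ k) G = (pcomp F G) ^ k := by
  induction k with
  | zero => simpa using pcomp_one hG
  | succ m ih => rw [pow_succ, pow_succ, pcomp_mul hG, ih]

lemma pcomp_sub {G : PowerSeries ℝ} (F H : PowerSeries ℝ) :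
    pcomp (F - H) G = pcomp F G - pcomp H G := by
  ext n
  simp [pcomp, sub_mul, Finset.sum_sub_distrib]

lemma coeff_expsub_pow (k j : ℕ) :
    coeff j ((exp ℝ - 1) ^ k) = (k.factorial : ℝ) / (j.factorial : ℝ) * S2 j k := by
  rw [sub_pow, map_sum]
  have h1 : ∀ i ∈ range (k+1), coeff j ((-1:PowerSeries ℝ)^(i+k) * exp ℝ ^ i * 1 ^ (k-i) * (k.choose i : PowerSeries ℝ))
      = (-1:ℝ)^(k-i) * (k.choose i : ℝ) * (i:ℝ)^j / (j.factorial : ℝ) := by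
    intro i hi
    simp only [mem_range] at hi
    rw [one_pow, mul_one]
    rw [mul_comm, ← map_natCast (C (R := ℝ)) (k.choose i), coeff_C_mul]
    rw [show ((-1:PowerSeries ℝ))^(i+k) = C ((-1:ℝ)^(i+k)) by push_cast [map_pow]; ring_nf; simp]
    rw [coeff_C_mul, exp_pow_eq_rescale_exp, coeff_rescale, coeff_exp]
    have : (-1:ℝ)^(i+k) = (-1:ℝ)^(k-i) := by
      rw [show i + k = (k-i) + 2*i by omega, pow_add, pow_mul]
      simp
    rw [this]
    push_cast
    ring
  rw [Finset.sum_congr rfl h1, S2]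
  rw [Finset.mul_sum, Finset.mul_sum]
  apply Finset.sum_congr rfl
  intro i _
  have hk : (k.factorial : ℝ) ≠ 0 := Nat.cast_ne_zero.mpr k.factorial_ne_zero
  field_simp


lemma coeff_G_pow (a μ : ℝ) (j n : ℕ) (hjn : j ≤ n) :
    coeff n ((a • (X:PowerSeries ℝ)^2 + μ • X) ^ j)
      = (j.choose (n-j) : ℝ) * a^(n-j) * μ^(j-(n-j)) := by
  have hG : a • (X:PowerSeries ℝ)^2 + μ • X = (C a * X + C μ) * X := by
    rw [smul_eq_C_mul, smul_eq_C_mul]; ring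
  rw [hG, mul_pow, ← Nat.sub_add_cancel hjn, coeff_mul_X_pow, add_pow, map_sum]
  simp only [Nat.add_sub_cancel]
  have h1 : ∀ i ∈ range (j+1), coeff (n-j) ((C a * X)^i * (C μ)^(j-i) * (j.choose i : PowerSeries ℝ))
      = if (n - j) = i then a^i * μ^(j-i) * (j.choose i : ℝ) else 0 := by
    intro i _
    have he : (C a * X) ^ i * (C μ) ^ (j - i) * (j.choose i : PowerSeries ℝ)
        = C (a^i * μ^(j-i) * (j.choose i : ℝ)) * X^i := by
      rw [mul_pow, ← map_pow, ← map_pow, ← map_natCast (C (R := ℝ)) (j.choose i), map_mul, map_mul]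
      ring
    rw [he, coeff_C_mul, coeff_X_pow]
    by_cases h : n - j = i <;> simp [h]
  rw [Finset.sum_congr rfl h1, Finset.sum_ite_eq (range (j+1)) (n-j)]
  by_cases h : n - j ∈ range (j+1)
  · simp only [h, if_true]; ring
  · simp only [h, if_false]
    simp only [mem_range, not_lt] at h
    rw [Nat.choose_eq_zero_of_lt (by omega)]
    simp

theorem stmt14 (μ σ : ℝ) (hμ : μ ≠ 0) (n k : ℕ) (hkn : k ≤ n) :
    cN n ((k.factorial : ℝ)⁻¹ •
        (pcomp (PowerSeries.exp ℝ)
          ((σ ^ 2 / 2) • PowerSeries.X ^ 2 + μ • PowerSeries.X) - 1) ^ k)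
      = ∑ j ∈ Finset.Icc k n,
          ((n.factorial : ℝ) / (j.factorial : ℝ)) * (j.choose (n - j) : ℝ) *
            μ ^ ((2 * j : ℤ) - (n : ℤ)) * (σ ^ 2 / 2) ^ (n - j) * S2 j k := by
  set a : ℝ := σ ^ 2 / 2 with ha
  set G : PowerSeries ℝ := a • (X:PowerSeries ℝ)^2 + μ • X with hGdef
  have hG : constantCoeff G = 0 := by
    simp [hGdef, smul_eq_C_mul, pow_two, ← mul_assoc]
  have hE : constantCoeff (exp ℝ - 1) = 0 := by
    simp [PowerSeries.exp]
  have step1 : pcomp (exp ℝ) G - 1 = pcomp (exp ℝ - 1) G := by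
    rw [pcomp_sub, pcomp_one hG]
  rw [cN, step1, ← pcomp_pow hG]
  rw [map_smul, smul_eq_mul, coeff_pcomp_big hG _ n (n+1) (by omega)]
  have hsub : Finset.Icc k n ⊆ range (n+1) := by
    intro x hx; simp only [Finset.mem_Icc] at hx; simp only [mem_range]; omega
  rw [← Finset.sum_subset hsub (by
    intro j hj hj2
    simp only [mem_range] at hj
    simp only [Finset.mem_Icc, not_and, not_le] at hj2
    rw [coeff_pow_zero hE (by omega), zero_mul])]
  rw [Finset.mul_sum, Finset.mul_sum]
  apply Finset.sum_congr rfl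
  intro j hj
  simp only [Finset.mem_Icc] at hj
  rw [coeff_expsub_pow, coeff_G_pow a μ j n hj.2]
  have hkf : (k.factorial : ℝ) ≠ 0 := Nat.cast_ne_zero.mpr k.factorial_ne_zero
  have hjf : (j.factorial : ℝ) ≠ 0 := Nat.cast_ne_zero.mpr j.factorial_ne_zero
  by_cases h2 : n ≤ 2 * j
  · have hz : μ ^ ((2 * j : ℤ) - (n : ℤ)) = μ ^ (j - (n - j)) := by
      rw [show (2 * j : ℤ) - (n : ℤ) = ((j - (n - j) : ℕ) : ℤ) by push_cast; omega, zpow_natCast]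
    rw [hz]
    field_simp
  · rw [Nat.choose_eq_zero_of_lt (by omega)]
    push_cast
    ring
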